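/- Correctness of the FFT-based subset convolution algorithm (abstract form): for f, g : 2^[n] → R, define h^{(k)} : 2^[n] → R by h^{(k)}(S) = Σ_{i=0}^{k} Σ_{a+b=enc(S)} F_i(a) G_{k−i}(b) where F_i, G_j are the sequence encodings of the chopped functions f^{(i)}, g^{(j)}. Then Σ_{k=0}^{n} [|S| = k] · h^{(k)}(S) = (f ∗ g)(S) for every S ⊆ [n]. -/

import Mathlib

open Finset

def bset (n : ℕ) : Finset ℕ := n.bitIndices.toFinset

lemma bset_sum (A : Finset ℕ) : bset (∑ i ∈ A, 2^i) = A :=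
  Finset.toFinset_bitIndices_twoPowSum A

@[simp] lemma bset_zero : bset 0 = ∅ := by simp [bset]
@[simp] lemma bset_one : bset 1 = {0} := by simp [bset]

lemma bset_two_mul (n : ℕ) : bset (2*n) = (bset n).image (·+1) := by
  simp only [bset, Nat.bitIndices_two_mul]; ext x; simp

lemma bset_two_mul_add_one (n : ℕ) :
    bset (2*n+1) = insert 0 ((bset n).image (·+1)) := by
  simp only [bset, Nat.bitIndices_two_mul_add_one]; ext x; simp

lemma succ_inj' : Function.Injective (fun x : ℕ => x + 1) := by intro a b h; simpa using h

lemma card_image_succ (A : Finset ℕ) : (A.image (·+1)).card = A.card :=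
  Finset.card_image_of_injective _ succ_inj'

lemma zero_not_mem_image_succ (A : Finset ℕ) : (0:ℕ) ∉ A.image (·+1) := by simp

lemma key : ∀ m a b : ℕ, a + b ≤ m →
    (bset (a+b)).card ≤ (bset a).card + (bset b).card ∧
    ((bset (a+b)).card = (bset a).card + (bset b).card →
      Disjoint (bset a) (bset b) ∧ bset a ∪ bset b = bset (a+b)) := by
  intro m
  induction m with
  | zero =>
    intro a b h
    have ha : a = 0 := by omega
    have hb : b = 0 := by omega
    subst ha; subst hb; simp
  | succ m ih =>
    intro a b hab
    rcases Nat.eq_zero_or_pos a with ha | ha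
    · subst ha; simp
    rcases Nat.eq_zero_or_pos b with hb | hb
    · subst hb; simp
    set a' := a / 2 with ha'
    set b' := b / 2 with hb'
    rcases Nat.mod_two_eq_zero_or_one a with hra | hra <;>
      rcases Nat.mod_two_eq_zero_or_one b with hrb | hrb
    · -- both even
      have h1 : a = 2 * a' := by omega
      have h3 : a + b = 2 * (a' + b') := by omega
      have h2 : b = 2 * b' := by omega
      have hih := ih a' b' (by omega)
      rw [h3, h1, h2, bset_two_mul, bset_two_mul, bset_two_mul,
        card_image_succ, card_image_succ, card_image_succ]
      refine ⟨hih.1, fun hc => ?_⟩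
      obtain ⟨hd, hu⟩ := hih.2 hc
      exact ⟨(Finset.disjoint_image succ_inj').2 hd, by rw [← Finset.image_union, hu]⟩
    · -- a even, b odd
      have h1 : a = 2 * a' := by omega
      have h3 : a + b = 2 * (a' + b') + 1 := by omega
      have h2 : b = 2 * b' + 1 := by omega
      have hih := ih a' b' (by omega)
      rw [h3, h1, h2, bset_two_mul, bset_two_mul_add_one, bset_two_mul_add_one,
        card_image_succ,
        Finset.card_insert_of_notMem (zero_not_mem_image_succ _),
        Finset.card_insert_of_notMem (zero_not_mem_image_succ _),
        card_image_succ, card_image_succ]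
      refine ⟨by have := hih.1; omega, fun hc => ?_⟩
      obtain ⟨hd, hu⟩ := hih.2 (by omega)
      refine ⟨?_, ?_⟩
      · rw [Finset.disjoint_insert_right]
        exact ⟨zero_not_mem_image_succ _, (Finset.disjoint_image succ_inj').2 hd⟩
      · rw [Finset.union_insert, ← Finset.image_union, hu]
    · -- a odd, b even
      have h1 : a = 2 * a' + 1 := by omega
      have h3 : a + b = 2 * (a' + b') + 1 := by omega
      have h2 : b = 2 * b' := by omega
      have hih := ih a' b' (by omega)
      rw [h3, h1, h2, bset_two_mul_add_one, bset_two_mul_add_one, bset_two_mul,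
        Finset.card_insert_of_notMem (zero_not_mem_image_succ _),
        Finset.card_insert_of_notMem (zero_not_mem_image_succ _),
        card_image_succ, card_image_succ, card_image_succ]
      refine ⟨by have := hih.1; omega, fun hc => ?_⟩
      obtain ⟨hd, hu⟩ := hih.2 (by omega)
      refine ⟨?_, ?_⟩
      · rw [Finset.disjoint_insert_left]
        exact ⟨zero_not_mem_image_succ _, (Finset.disjoint_image succ_inj').2 hd⟩
      · rw [Finset.insert_union, ← Finset.image_union, hu]
    · -- both odd
      have h1 : a = 2 * a' + 1 := by omega
      have h3 : a + b = 2 * (a' + b' + 1) := by omega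
      have h2 : b = 2 * b' + 1 := by omega
      have hih1 := (ih (a' + b') 1 (by omega)).1
      have hih2 := (ih a' b' (by omega)).1
      rw [h3, h1, h2, bset_two_mul, bset_two_mul_add_one, bset_two_mul_add_one,
        card_image_succ,
        Finset.card_insert_of_notMem (zero_not_mem_image_succ _),
        Finset.card_insert_of_notMem (zero_not_mem_image_succ _),
        card_image_succ, card_image_succ]
      simp only [bset_one, Finset.card_singleton] at hih1
      constructor
      · omega
      · intro hc; omega

def enc {n : ℕ} (T : Finset (Fin n)) : ℕ := ∑ t ∈ T, 2 ^ (t : ℕ)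

def chop {R : Type*} [CommRing R] {n : ℕ}
    (f : Finset (Fin n) → R) (i : ℕ) (T : Finset (Fin n)) : R :=
  if T.card = i then f T else 0

def seqEnc {R : Type*} [CommRing R] {n : ℕ}
    (f : Finset (Fin n) → R) (i : ℕ) (a : ℕ) : R :=
  ∑ T ∈ Finset.univ.filter (fun T : Finset (Fin n) => enc T = a), chop f i T

def subsetConv {R : Type*} [CommRing R] {n : ℕ}
    (f g : Finset (Fin n) → R) (S : Finset (Fin n)) : R :=
  ∑ T ∈ S.powerset, f T * g (S \ T)

lemma bset_enc {n : ℕ} (T : Finset (Fin n)) : bset (enc T) = T.image Fin.val := by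
  rw [enc, ← Finset.sum_image (f := fun i => 2^i) (g := Fin.val)
    (by intro x _ y _ h; exact Fin.val_injective h)]
  exact bset_sum _

lemma key_enc {n : ℕ} {T U S : Finset (Fin n)} (h : enc T + enc U = enc S)
    (hc : T.card + U.card = S.card) : Disjoint T U ∧ T ∪ U = S := by
  have hk := (key (enc T + enc U) (enc T) (enc U) le_rfl).2
  rw [h, bset_enc, bset_enc, bset_enc] at hk
  have hcards : ∀ (V : Finset (Fin n)), (V.image Fin.val).card = V.card := fun V =>
    Finset.card_image_of_injective _ Fin.val_injective
  obtain ⟨hd, hu⟩ := hk (by rw [hcards, hcards, hcards]; omega)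
  constructor
  · rwa [Finset.disjoint_image Fin.val_injective] at hd
  · rw [← Finset.image_union] at hu
    exact Finset.image_injective Fin.val_injective hu

lemma cond_iff {n : ℕ} (T U S : Finset (Fin n)) :
    (enc T + enc U = enc S ∧ T.card + U.card = S.card) ↔ (T ⊆ S ∧ U = S \ T) := by
  constructor
  · rintro ⟨h1, h2⟩
    obtain ⟨hd, hu⟩ := key_enc h1 h2
    refine ⟨hu ▸ Finset.subset_union_left, ?_⟩
    rw [← hu, Finset.union_sdiff_cancel_left hd]
  · rintro ⟨hsub, rfl⟩
    constructor
    · rw [enc, enc, enc, add_comm]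
      exact Finset.sum_sdiff hsub
    · have := Finset.card_le_card hsub
      rw [Finset.card_sdiff_of_subset hsub]
      omega

theorem fft_subset_conv_correct {R : Type*} [CommRing R] {n : ℕ}
    (f g : Finset (Fin n) → R) (S : Finset (Fin n)) :
    ∑ k ∈ Finset.range (n + 1),
      (if S.card = k then
        ∑ i ∈ Finset.range (k + 1),
          ∑ p ∈ Finset.HasAntidiagonal.antidiagonal (enc S), seqEnc f i p.1 * seqEnc g (k - i) p.2
      else 0)
      = subsetConv f g S := by
  classical
  have hcard : S.card ∈ Finset.range (n + 1) := by
    rw [Finset.mem_range, Nat.lt_succ_iff]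
    simpa using Finset.card_le_univ S
  rw [Finset.sum_ite_eq, if_pos hcard]
  set k := S.card with hk
  -- expand seqEnc products into double sums with indicators
  have step1 : ∀ (i : ℕ) (p : ℕ × ℕ), seqEnc f i p.1 * seqEnc g (k - i) p.2 =
      ∑ T : Finset (Fin n), ∑ U : Finset (Fin n),
        if (enc T, enc U) = p then chop f i T * chop g (k - i) U else 0 := by
    intro i p
    rw [seqEnc, seqEnc, Finset.sum_filter, Finset.sum_filter, Finset.sum_mul_sum]
    refine Finset.sum_congr rfl fun T _ => Finset.sum_congr rfl fun U _ => ?_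
    rcases p with ⟨a, b⟩
    by_cases h1 : enc T = a <;> by_cases h2 : enc U = b <;>
      simp [h1, h2, Prod.ext_iff]
  calc
    ∑ i ∈ Finset.range (k + 1), ∑ p ∈ Finset.HasAntidiagonal.antidiagonal (enc S),
        seqEnc f i p.1 * seqEnc g (k - i) p.2
      = ∑ i ∈ Finset.range (k + 1), ∑ T : Finset (Fin n), ∑ U : Finset (Fin n),
          if enc T + enc U = enc S then chop f i T * chop g (k - i) U else 0 := by
        refine Finset.sum_congr rfl fun i _ => ?_
        rw [Finset.sum_congr rfl fun p _ => step1 i p]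
        rw [Finset.sum_comm]
        refine Finset.sum_congr rfl fun T _ => ?_
        rw [Finset.sum_comm]
        refine Finset.sum_congr rfl fun U _ => ?_
        rw [Finset.sum_ite_eq (Finset.HasAntidiagonal.antidiagonal (enc S)) (enc T, enc U)
          (fun _ => chop f i T * chop g (k - i) U)]
        simp only [Finset.HasAntidiagonal.mem_antidiagonal]
    _ = ∑ T : Finset (Fin n), ∑ U : Finset (Fin n),
          if enc T + enc U = enc S then
            ∑ i ∈ Finset.range (k + 1), chop f i T * chop g (k - i) U else 0 := by
        rw [Finset.sum_comm]
        refine Finset.sum_congr rfl fun T _ => ?_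
        rw [Finset.sum_comm]
        refine Finset.sum_congr rfl fun U _ => ?_
        split_ifs <;> simp
    _ = ∑ T : Finset (Fin n), ∑ U : Finset (Fin n),
          if enc T + enc U = enc S ∧ T.card + U.card = k then f T * g U else 0 := by
        refine Finset.sum_congr rfl fun T _ => Finset.sum_congr rfl fun U _ => ?_
        have inner : ∑ i ∈ Finset.range (k + 1), chop f i T * chop g (k - i) U
            = if T.card + U.card = k then f T * g U else 0 := by
          simp only [chop]
          have : ∀ i ∈ Finset.range (k+1),
              (if T.card = i then f T else 0) * (if U.card = k - i then g U else 0)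
              = if T.card = i then f T * (if U.card = k - i then g U else 0) else 0 := by
            intro i _; split_ifs <;> simp
          rw [Finset.sum_congr rfl this, Finset.sum_ite_eq (Finset.range (k+1)) T.card]
          by_cases hTk : T.card + U.card = k
          · rw [if_pos hTk, if_pos (by rw [Finset.mem_range]; omega),
              if_pos (by omega)]
          · rw [if_neg hTk]
            by_cases h1 : T.card ∈ Finset.range (k+1)
            · rw [if_pos h1, if_neg (by rw [Finset.mem_range] at h1; omega), mul_zero]
            · rw [if_neg h1]
        split_ifs with h1 h2 h2
        · rw [inner, if_pos h2.2]
        · rw [inner, if_neg (by tauto)]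
        · exact absurd h2.1 h1
        · rfl
    _ = ∑ T : Finset (Fin n), ∑ U : Finset (Fin n),
          if T ⊆ S ∧ U = S \ T then f T * g U else 0 := by
        refine Finset.sum_congr rfl fun T _ => Finset.sum_congr rfl fun U _ => ?_
        exact if_congr (cond_iff T U S) rfl rfl
    _ = subsetConv f g S := by
        rw [subsetConv]
        have : ∀ T : Finset (Fin n), ∑ U : Finset (Fin n),
            (if T ⊆ S ∧ U = S \ T then f T * g U else 0)
            = if T ⊆ S then f T * g (S \ T) else 0 := by
          intro T
          by_cases hT : T ⊆ S
          · simp only [hT, true_and]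
            rw [Finset.sum_ite_eq' Finset.univ (S \ T) (fun U => f T * g U)]
            simp
          · simp [hT]
        rw [Finset.sum_congr rfl fun T _ => this T]
        rw [← Finset.sum_filter]
        refine Finset.sum_congr ?_ fun _ _ => rfl
        ext T; simp
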